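/- arXiv:1603.09387 — 2 statements merged into one kernel-verified Lean document; each statement's English description precedes it below -/
import Mathlib

section
/- Every nonempty word u over a totally ordered alphabet admits a unique decomposition u = l_1 l_2 ⋯ l_r as a non-increasing concatenation of Lyndon words, i.e. with each l_i Lyndon and l_r ≤ ⋯ ≤ l_1 in lexicographic order. -/
/-- `u` is a Lyndon word: nonempty, and lexicographically smaller than every
proper nonempty "right factor" arising from a factorization `u = v ++ w`. -/
def IsLyndon {X : Type*} [LinearOrder X] (u : List X) : Prop :=
  u ≠ [] ∧ ∀ v w : List X, v ≠ [] → w ≠ [] → u = v ++ w → u < w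

section Aux
variable {X : Type*} [LinearOrder X]

lemma lt_append_right' {x t : List X} (ht : t ≠ []) : x < x ++ t := by
  induction x with
  | nil => cases t with
    | nil => exact absurd rfl ht
    | cons a l => exact List.Lex.nil
  | cons a l ih => exact List.Lex.cons ih

lemma le_append' (x t : List X) : x ≤ x ++ t := by
  cases t with
  | nil => simp
  | cons a l => exact le_of_lt (lt_append_right' (by simp))

lemma append_lt_append_left_iff {s t₁ t₂ : List X} : s ++ t₁ < s ++ t₂ ↔ t₁ < t₂ := by
  constructor
  · intro h
    induction s with
    | nil => exact h
    | cons a l ih => exact ih (List.lex_cons_iff.mp h)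
  · intro h
    exact List.Lex.append_left _ h s

lemma lt_append_of_lt_of_not_prefix : ∀ {x y : List X}, x < y → ¬ x <+: y →
    ∀ (s t : List X), x ++ s < y ++ t
  | _, _, .nil, h => absurd (List.nil_prefix) h
  | _, _, .rel hab, _ => fun _ _ => .rel hab
  | _, _, .cons h, hp => fun s t =>
      .cons (lt_append_of_lt_of_not_prefix h
        (fun hpre => hp (List.cons_prefix_cons.mpr ⟨rfl, hpre⟩)) s t)

lemma append_lt_right {u v : List X} (hv : IsLyndon v) (huv : u < v) (hu : u ≠ []) :
    u ++ v < v := by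
  by_cases hp : u <+: v
  · obtain ⟨v', rfl⟩ := hp
    have hv' : v' ≠ [] := by
      rintro rfl
      simp at huv
    have h1 : u ++ v' < v' := hv.2 u v' hu hv' rfl
    exact append_lt_append_left_iff.mpr h1
  · simpa using lt_append_of_lt_of_not_prefix huv hp v []

lemma lyndon_append {u v : List X} (hu : IsLyndon u) (hv : IsLyndon v) (huv : u < v) :
    IsLyndon (u ++ v) := by
  refine ⟨by simp [hu.1], ?_⟩
  intro p q hp hq heq
  rcases List.append_eq_append_iff.mp heq with ⟨w, hw1, hw2⟩ | ⟨w, hw1, hw2⟩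
  · -- p = u ++ w, v = w ++ q
    rcases eq_or_ne w [] with rfl | hw
    · simp only [List.nil_append] at hw2
      subst hw2
      exact append_lt_right hv huv hu.1
    · exact lt_trans (append_lt_right hv huv hu.1) (hv.2 w q hw hq hw2)
  · -- u = p ++ w, q = w ++ v
    rcases eq_or_ne w [] with rfl | hw
    · simp only [List.append_nil] at hw1
      simp only [List.nil_append] at hw2
      subst hw2
      subst hw1
      exact append_lt_right hv huv hu.1
    · have huw : u < w := hu.2 p w hp hw hw1
      have hnp : ¬ u <+: w := by
        intro hpre
        have h1 : u.length ≤ w.length := hpre.length_le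
        have h2 : u.length = p.length + w.length := by rw [hw1, List.length_append]
        have h3 : p.length = 0 := by omega
        exact hp (List.length_eq_zero_iff.mp h3)
      rw [hw2]
      exact lt_append_of_lt_of_not_prefix huw hnp v v

lemma chain_ge_head {a : List X} : ∀ {l : List (List X)},
    List.Chain' (fun x y => y ≤ x) (a :: l) → ∀ x ∈ l, x ≤ a := by
  intro l hc x hx
  induction l generalizing a with
  | nil => simp at hx
  | cons b t ih =>
    rcases List.mem_cons.mp hx with rfl | hx
    · exact (List.isChain_cons_cons.mp hc).1
    · exact le_trans (ih (List.isChain_cons_cons.mp hc).2 hx) (List.isChain_cons_cons.mp hc).1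

lemma suffix_append_cases {s x y : List X} (h : s <:+ x ++ y) :
    s <:+ y ∨ ∃ x', x' <:+ x ∧ x' ≠ [] ∧ s = x' ++ y := by
  obtain ⟨t, ht⟩ := h
  rcases List.append_eq_append_iff.mp ht with ⟨w, hw1, hw2⟩ | ⟨w, hw1, hw2⟩
  · rcases eq_or_ne w [] with rfl | hw
    · simp only [List.nil_append] at hw2
      exact Or.inl (hw2 ▸ List.suffix_refl y)
    · exact Or.inr ⟨w, ⟨t, hw1.symm⟩, hw, hw2⟩
  · exact Or.inl ⟨w, hw2.symm⟩

/-- The last factor of a non-increasing Lyndon factorization is `≤` every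
nonempty suffix of the word. -/
lemma getLast_le_suffix : ∀ (L : List (List X)) (hL : L ≠ []),
    (∀ l ∈ L, IsLyndon l) → List.Chain' (fun a b => b ≤ a) L →
    ∀ s, s ≠ [] → s <:+ L.flatten → L.getLast hL ≤ s := by
  intro L
  induction L with
  | nil => intro h; exact absurd rfl h
  | cons a L' ih =>
    intro _ hlyn hchain s hs hsuf
    cases L' with
    | nil =>
      simp only [List.flatten_cons, List.flatten_nil, List.append_nil] at hsuf
      simp only [List.getLast_singleton]
      obtain ⟨t, ht⟩ := hsuf
      rcases eq_or_ne t [] with rfl | htne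
      · simp only [List.nil_append] at ht
        exact le_of_eq ht.symm
      · exact le_of_lt ((hlyn a (by simp)).2 t s htne hs ht.symm)
    | cons b L'' =>
      have hL'ne : (b :: L'') ≠ [] := by simp
      have hlast : (a :: b :: L'').getLast (by simp) = (b :: L'').getLast hL'ne := by
        simp [List.getLast_cons]
      rw [hlast]
      have hmem : (b :: L'').getLast hL'ne ∈ b :: L'' := List.getLast_mem hL'ne
      have hle_a : (b :: L'').getLast hL'ne ≤ a := chain_ge_head hchain _ hmem
      simp only [List.flatten_cons] at hsuf
      rcases suffix_append_cases hsuf with h | ⟨a', ha'suf, ha'ne, rfl⟩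
      · exact ih hL'ne (fun l hl => hlyn l (List.mem_cons_of_mem _ hl))
          (List.isChain_cons_cons.mp hchain).2 s hs h
      · rcases eq_or_ne a' a with rfl | hne
        · exact le_trans hle_a (le_append' _ _)
        · obtain ⟨t, ht⟩ := ha'suf
          have htne : t ≠ [] := by rintro rfl; exact hne (by simpa using ht)
          have halt : a < a' := (hlyn a (by simp)).2 t a' htne ha'ne ht.symm
          have hnp : ¬ a <+: a' := by
            intro hpre
            have h1 : a.length ≤ a'.length := hpre.length_le
            have h2 : a.length = t.length + a'.length := by rw [← ht, List.length_append]
            have h3 : t.length = 0 := by omega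
            exact htne (List.length_eq_zero_iff.mp h3)
          have hlt : a < a' ++ (b :: L'').flatten := by
            simpa using lt_append_of_lt_of_not_prefix halt hnp [] ((b :: L'').flatten)
          refine le_of_lt (lt_of_le_of_lt hle_a ?_)
          simpa using hlt


lemma exists_chain : ∀ (n : ℕ) (L : List (List X)), L.length ≤ n → (∀ l ∈ L, IsLyndon l) →
    ∃ M : List (List X), M.flatten = L.flatten ∧ (∀ l ∈ M, IsLyndon l) ∧
      M.Chain' (fun a b => b ≤ a) ∧ M.length ≤ L.length := by
  intro n
  induction n with
  | zero =>
    intro L hlen _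
    have : L = [] := List.length_eq_zero_iff.mp (Nat.le_zero.mp hlen)
    subst this
    exact ⟨[], by simp, by simp, List.isChain_nil, by simp⟩
  | succ n ih =>
    intro L hlen hlyn
    cases L with
    | nil => exact ⟨[], by simp, by simp, List.isChain_nil, by simp⟩
    | cons a t =>
      have htlen : t.length ≤ n := by simp at hlen; omega
      obtain ⟨M', hf, hMl, hMc, hMlen⟩ := ih t htlen
        (fun l hl => hlyn l (List.mem_cons_of_mem _ hl))
      cases M' with
      | nil =>
        refine ⟨[a], ?_, ?_, List.isChain_singleton _, by simp⟩
        · simp only [List.flatten_nil] at hf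
          simp [← hf]
        · intro l hl
          simp only [List.mem_singleton] at hl
          subst hl
          exact hlyn l (by simp)
      | cons c s =>
        by_cases hca : c ≤ a
        · refine ⟨a :: c :: s, ?_, ?_, List.isChain_cons_cons.mpr ⟨hca, hMc⟩, ?_⟩
          · simp only [List.flatten_cons] at hf ⊢
            rw [hf]
          · intro l hl
            rcases List.mem_cons.mp hl with rfl | hl'
            · exact hlyn l (by simp)
            · exact hMl l hl'
          · simp only [List.length_cons] at hMlen ⊢
            omega
        · push_neg at hca
          have hlc : IsLyndon (a ++ c) :=
            lyndon_append (hlyn a (by simp)) (hMl c (by simp)) hca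
          have hlen2 : ((a ++ c) :: s).length ≤ n := by
            simp only [List.length_cons] at hMlen ⊢
            omega
          obtain ⟨M'', h1, h2, h3, h4⟩ := ih ((a ++ c) :: s) hlen2 (fun l hl => by
            rcases List.mem_cons.mp hl with rfl | hl'
            · exact hlc
            · exact hMl l (List.mem_cons_of_mem _ hl'))
          refine ⟨M'', ?_, h2, h3, ?_⟩
          · simp only [List.flatten_cons] at h1 hf ⊢
            rw [h1, List.append_assoc, hf]
          · simp only [List.length_cons] at h4 hMlen ⊢
            omega

lemma flatten_eq_nil_of_lyndon {L : List (List X)} (h : ∀ l ∈ L, IsLyndon l)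
    (hf : L.flatten = []) : L = [] := by
  cases L with
  | nil => rfl
  | cons a t =>
    simp only [List.flatten_cons, List.append_eq_nil_iff] at hf
    exact absurd hf.1 (h a (by simp)).1

lemma lyndon_fact_unique : ∀ (n : ℕ) (u : List X), u.length ≤ n →
    ∀ L M : List (List X),
    u = L.flatten → (∀ l ∈ L, IsLyndon l) → L.Chain' (fun a b => b ≤ a) →
    u = M.flatten → (∀ l ∈ M, IsLyndon l) → M.Chain' (fun a b => b ≤ a) → L = M := by
  intro n
  induction n with
  | zero =>
    intro u hlen L M hL hLl _ hM hMl _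
    have hu : u = [] := List.length_eq_zero_iff.mp (Nat.le_zero.mp hlen)
    subst hu
    rw [flatten_eq_nil_of_lyndon hLl hL.symm, flatten_eq_nil_of_lyndon hMl hM.symm]
  | succ n ih =>
    intro u hlen L M hL hLl hLc hM hMl hMc
    rcases eq_or_ne u [] with rfl | hu
    · rw [flatten_eq_nil_of_lyndon hLl hL.symm, flatten_eq_nil_of_lyndon hMl hM.symm]
    · have hLne : L ≠ [] := by rintro rfl; simp at hL; exact hu hL
      have hMne : M ≠ [] := by rintro rfl; simp at hM; exact hu hM
      set lL := L.getLast hLne with hlLdef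
      set lM := M.getLast hMne with hlMdef
      have hLsplit : L.dropLast ++ [lL] = L := List.dropLast_append_getLast hLne
      have hMsplit : M.dropLast ++ [lM] = M := List.dropLast_append_getLast hMne
      have hufL : u = L.dropLast.flatten ++ lL := by
        conv_lhs => rw [hL, ← hLsplit]
        simp
      have hufM : u = M.dropLast.flatten ++ lM := by
        conv_lhs => rw [hM, ← hMsplit]
        simp
      have hlLne : lL ≠ [] := (hLl lL (List.getLast_mem hLne)).1
      have hlMne : lM ≠ [] := (hMl lM (List.getLast_mem hMne)).1
      have hsfxL : lL <:+ M.flatten := ⟨L.dropLast.flatten, by rw [← hufL]; exact hM⟩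
      have hsfxM : lM <:+ L.flatten := ⟨M.dropLast.flatten, by rw [← hufM]; exact hL⟩
      have hEq : lL = lM :=
        le_antisymm (getLast_le_suffix L hLne hLl hLc lM hlMne hsfxM)
          (getLast_le_suffix M hMne hMl hMc lL hlLne hsfxL)
      have hflat : L.dropLast.flatten = M.dropLast.flatten := by
        have h := hufL.symm.trans hufM
        rw [← hEq] at h
        exact List.append_cancel_right h
      have hlen' : L.dropLast.flatten.length ≤ n := by
        have h1 : u.length = L.dropLast.flatten.length + lL.length := by
          rw [hufL, List.length_append]
        have h2 : 0 < lL.length := List.length_pos_iff.mpr hlLne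
        omega
      have hLc' : L.dropLast.Chain' (fun a b => b ≤ a) := by
        rw [← hLsplit] at hLc
        exact (List.isChain_append.mp hLc).1
      have hMc' : M.dropLast.Chain' (fun a b => b ≤ a) := by
        rw [← hMsplit] at hMc
        exact (List.isChain_append.mp hMc).1
      have hdrop : L.dropLast = M.dropLast :=
        ih L.dropLast.flatten hlen' L.dropLast M.dropLast rfl
          (fun l hl => hLl l ((List.dropLast_sublist L).subset hl)) hLc'
          hflat
          (fun l hl => hMl l ((List.dropLast_sublist M).subset hl)) hMc'
      rw [← hLsplit, ← hMsplit, hdrop, hEq]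

lemma flatten_map_singleton (u : List X) : (u.map (fun a => [a])).flatten = u := by
  induction u with
  | nil => simp
  | cons a t ih => simp [ih]

end Aux

/-- Chen–Fox–Lyndon: every nonempty word admits a unique decomposition as a
non-increasing concatenation of Lyndon words. -/
theorem lyndon_factorization_unique {X : Type*} [LinearOrder X] (u : List X) (hu : u ≠ []) :
    ∃! L : List (List X),
      u = L.flatten ∧ (∀ l ∈ L, IsLyndon l) ∧ L.Chain' (fun a b => b ≤ a) := by
  have hsing : ∀ l ∈ u.map (fun a => [a]), IsLyndon l := by
    intro l hl
    simp only [List.mem_map] at hl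
    obtain ⟨a, _, rfl⟩ := hl
    refine ⟨by simp, ?_⟩
    intro v w hv hw heq
    exfalso
    have h := congrArg List.length heq
    simp only [List.length_append, List.length_cons, List.length_nil] at h
    have hv' := List.length_pos_iff.mpr hv
    have hw' := List.length_pos_iff.mpr hw
    omega
  obtain ⟨M, hf, hl, hc, _⟩ :=
    exists_chain (u.map (fun a => [a])).length (u.map (fun a => [a])) le_rfl hsing
  have hMf : M.flatten = u := hf.trans (flatten_map_singleton u)
  refine ⟨M, ⟨hMf.symm, hl, hc⟩, ?_⟩
  rintro N ⟨h1, h2, h3⟩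
  exact lyndon_fact_unique u.length u le_rfl N M h1 h2 h3 hMf.symm hl hc
end

section
/- Let U be a cocommutative Hopf algebra over a field k of characteristic zero, generated as an algebra by a finite set S of primitive elements. Then U is isomorphic as a Hopf algebra to the universal enveloping algebra U(n) of the Lie algebra n = P(U) of primitive elements of U. -/
open TensorProduct

attribute [local instance 100] LieRing.ofAssociativeRing

set_option maxHeartbeats 1000000
set_option synthInstance.maxHeartbeats 1000000

open TensorProduct

namespace MMproof

variable {k U : Type*} [Field k] [CharZero k] [Ring U] [HopfAlgebra k U]

/-- commutator of "primitive-shaped" tensors -/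
lemma prim_mul_aux {A : Type*} [Ring A] [Algebra k A] (a b : A) :
    (a ⊗ₜ[k] 1 + 1 ⊗ₜ[k] a) * (b ⊗ₜ[k] 1 + 1 ⊗ₜ[k] b)
      - (b ⊗ₜ[k] 1 + 1 ⊗ₜ[k] b) * (a ⊗ₜ[k] 1 + 1 ⊗ₜ[k] a)
    = (a * b - b * a) ⊗ₜ[k] 1 + 1 ⊗ₜ[k] (a * b - b * a) := by
  simp only [mul_add, add_mul, Algebra.TensorProduct.tmul_mul_tmul, one_mul, mul_one,
    TensorProduct.sub_tmul, TensorProduct.tmul_sub]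
  abel

variable (k U) in
/-- The Lie algebra of primitive elements of `U`. -/
def primLie : LieSubalgebra k U where
  carrier := {x : U | Coalgebra.comul (R := k) x = x ⊗ₜ[k] 1 + 1 ⊗ₜ[k] x}
  add_mem' := by
    intro a b ha hb
    simp only [Set.mem_setOf_eq] at *
    rw [map_add, ha, hb, TensorProduct.add_tmul, TensorProduct.tmul_add]
    abel
  zero_mem' := by simp
  smul_mem' := by
    intro c x hx
    simp only [Set.mem_setOf_eq] at *
    rw [map_smul, hx, smul_add, TensorProduct.smul_tmul', TensorProduct.tmul_smul,
      TensorProduct.smul_tmul']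
  lie_mem' := by
    intro a b ha hb
    simp only [Set.mem_setOf_eq] at *
    rw [Ring.lie_def, map_sub, Bialgebra.comul_mul, Bialgebra.comul_mul, ha, hb]
    exact prim_mul_aux a b

lemma mem_primLie {x : U} :
    x ∈ primLie k U ↔ Coalgebra.comul (R := k) x = x ⊗ₜ[k] 1 + 1 ⊗ₜ[k] x := Iff.rfl

lemma one_ne_zero_U (h1 : Coalgebra.counit (R := k) (1 : U) = 1) : (1 : U) ≠ 0 := by
  intro h
  rw [h, map_zero] at h1
  exact one_ne_zero h1.symm

lemma counit_primLie {y : U} (hy : y ∈ primLie k U) : Coalgebra.counit (R := k) y = 0 := by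
  have h := Coalgebra.rTensor_counit_comul (R := k) y
  rw [mem_primLie] at hy
  rw [hy, map_add, LinearMap.rTensor_tmul, LinearMap.rTensor_tmul, Bialgebra.counit_one] at h
  -- h : counit y ⊗ₜ 1 + 1 ⊗ₜ y = 1 ⊗ₜ y
  have h2 : (Coalgebra.counit (R := k) y) ⊗ₜ[k] (1 : U) = 0 := by
    have h' := congrArg (fun z => z - (1 : k) ⊗ₜ[k] y) h
    simpa using h'
  have h3 := congrArg (TensorProduct.lid k U) h2
  rw [map_zero, TensorProduct.lid_tmul] at h3
  rcases smul_eq_zero.mp h3 with hc | hc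
  · exact hc
  · exact absurd hc (one_ne_zero_U (Bialgebra.counit_one (R := k) (A := U)))

section UEA

local notation "N" => primLie k U
local notation "A" => UniversalEnvelopingAlgebra k (primLie k U)
local notation "ιA" => UniversalEnvelopingAlgebra.ι k (L := primLie k U)

variable (k U) in
/-- the canonical algebra map `U(P(U)) → U`. -/
noncomputable def phi : A →ₐ[k] U :=
  UniversalEnvelopingAlgebra.lift k (primLie k U).incl

@[simp] lemma phi_ι (x : N) : phi k U (ιA x) = (x : U) := by
  rw [phi, UniversalEnvelopingAlgebra.lift_ι_apply]; rfl

variable (k U) in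
/-- comultiplication on the enveloping algebra. -/
noncomputable def comulA : A →ₐ[k] (A ⊗[k] A) :=
  UniversalEnvelopingAlgebra.lift k
    { toLinearMap :=
        ((TensorProduct.mk k A A).flip 1).comp (ιA).toLinearMap
          + (TensorProduct.mk k A A 1).comp (ιA).toLinearMap
      map_lie' := by
        intro x y
        simp only [LinearMap.toFun_eq_coe, LinearMap.add_apply, LinearMap.coe_comp,
          Function.comp_apply, LieHom.coe_toLinearMap, TensorProduct.mk_apply,
          LinearMap.flip_apply, LieHom.map_lie, Ring.lie_def, prim_mul_aux] }

@[simp] lemma comulA_ι (x : N) :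
    comulA k U (ιA x) = (ιA x) ⊗ₜ[k] 1 + 1 ⊗ₜ[k] (ιA x) := by
  rw [comulA, UniversalEnvelopingAlgebra.lift_ι_apply]
  rfl

/-- φ intertwines comultiplications -/
lemma comul_phi (a : A) :
    (TensorProduct.map (phi k U).toLinearMap (phi k U).toLinearMap) (comulA k U a)
      = Coalgebra.comul (R := k) (phi k U a) := by
  have key : (Algebra.TensorProduct.map (phi k U) (phi k U)).comp (comulA k U)
      = (Bialgebra.comulAlgHom k U).comp (phi k U) := by
    ext x
    simp only [LieHom.coe_comp, Function.comp_apply, AlgHom.coe_toLieHom, AlgHom.coe_comp,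
      comulA_ι, map_add, Algebra.TensorProduct.map_tmul, map_one, phi_ι,
      Bialgebra.comulAlgHom_apply]
    exact (mem_primLie.mp x.2).symm
  have h := AlgHom.congr_fun key a
  simp only [AlgHom.coe_comp, Function.comp_apply] at h
  have h2 : Algebra.TensorProduct.map (phi k U) (phi k U) (comulA k U a)
      = TensorProduct.map (phi k U).toLinearMap (phi k U).toLinearMap (comulA k U a) := by
    induction (comulA k U a) with
    | zero => simp
    | tmul u v => simp
    | add u v hu hv => simp_all
  rw [← h2]
  exact h

variable (k U) in
/-- filtration by products of at most m primitives -/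
noncomputable def Fil (m : ℕ) : Submodule k A :=
  Submodule.span k {a : A | ∃ l : List N, l.length ≤ m ∧ (l.map fun x => ιA x).prod = a}

lemma monomial_mem_Fil (l : List N) {m : ℕ} (h : l.length ≤ m) :
    (l.map fun x => ιA x).prod ∈ Fil k U m :=
  Submodule.subset_span ⟨l, h, rfl⟩

lemma one_mem_Fil (m : ℕ) : (1 : A) ∈ Fil k U m := by
  simpa using monomial_mem_Fil ([] : List N) (Nat.zero_le m)

lemma ι_mem_Fil {m : ℕ} (hm : 1 ≤ m) (x : N) : ιA x ∈ Fil k U m := by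
  simpa using monomial_mem_Fil ([x] : List N) hm

lemma Fil_mono {m m' : ℕ} (h : m ≤ m') : Fil k U m ≤ Fil k U m' :=
  Submodule.span_mono (fun a ⟨l, hl, he⟩ => ⟨l, hl.trans h, he⟩)

lemma mul_mem_Fil {i j : ℕ} {a b : A} (ha : a ∈ Fil k U i) (hb : b ∈ Fil k U j) :
    a * b ∈ Fil k U (i + j) := by
  induction ha using Submodule.span_induction with
  | mem a h =>
    obtain ⟨l, hl, rfl⟩ := h
    induction hb using Submodule.span_induction with
    | mem b h' =>
      obtain ⟨l', hl', rfl⟩ := h'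
      rw [← List.prod_append, ← List.map_append]
      exact monomial_mem_Fil _ (by simpa using Nat.add_le_add hl hl')
    | zero => simp
    | add u v _ _ hu hv => rw [mul_add]; exact add_mem hu hv
    | smul c u _ hu => rw [mul_smul_comm]; exact Submodule.smul_mem _ _ hu
  | zero => simp
  | add u v _ _ hu hv => rw [add_mul]; exact add_mem hu hv
  | smul c u _ hu => rw [smul_mul_assoc]; exact Submodule.smul_mem _ _ hu

/-- commutator with a primitive preserves the filtration -/
lemma comm_monomial (x : N) (l : List N) :
    ιA x * (l.map fun z => ιA z).prod - (l.map fun z => ιA z).prod * ιA x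
      ∈ Fil k U l.length := by
  induction l with
  | nil => simp
  | cons y t ih =>
    have key : ιA x * ((y :: t).map fun z => ιA z).prod
        - ((y :: t).map fun z => ιA z).prod * ιA x
        = (ιA ⁅x, y⁆) * (t.map fun z => ιA z).prod
          + ιA y * (ιA x * (t.map fun z => ιA z).prod
              - (t.map fun z => ιA z).prod * ιA x) := by
      simp only [List.map_cons, List.prod_cons, LieHom.map_lie, Ring.lie_def]
      noncomm_ring
    rw [key]
    refine add_mem ?_ ?_
    · have : (ιA ⁅x, y⁆) * (t.map fun z => ιA z).prod
          = ((⁅x, y⁆ :: t).map fun z => ιA z).prod := by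
        rw [List.map_cons, List.prod_cons]
      rw [this]
      exact monomial_mem_Fil _ (by simp)
    · have h2 := mul_mem_Fil (ι_mem_Fil (le_refl 1) y) ih
      simpa [Nat.add_comm] using h2

lemma comm_mem_Fil (x : N) {m : ℕ} {a : A} (ha : a ∈ Fil k U m) :
    ιA x * a - a * ιA x ∈ Fil k U m := by
  induction ha using Submodule.span_induction with
  | mem a h =>
    obtain ⟨l, hl, rfl⟩ := h
    exact Fil_mono hl (comm_monomial x l)
  | zero => simp
  | add u v _ _ hu hv =>
    have : ιA x * (u + v) - (u + v) * ιA x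
        = (ιA x * u - u * ιA x) + (ιA x * v - v * ιA x) := by noncomm_ring
    rw [this]; exact add_mem hu hv
  | smul c u _ hu =>
    have : ιA x * (c • u) - (c • u) * ιA x = c • (ιA x * u - u * ιA x) := by
      rw [smul_sub, mul_smul_comm, smul_mul_assoc]
    rw [this]; exact Submodule.smul_mem _ _ hu

variable (k U) in
/-- joint filtration on the tensor square -/
noncomputable def Fil2 (m : ℕ) : Submodule k ((UniversalEnvelopingAlgebra k (primLie k U)) ⊗[k] (UniversalEnvelopingAlgebra k (primLie k U))) :=
  Submodule.span k {z | ∃ i j : ℕ, i + j ≤ m ∧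
    ∃ u ∈ Fil k U i, ∃ v ∈ Fil k U j, u ⊗ₜ[k] v = z}

lemma Fil2_mono {m m' : ℕ} (h : m ≤ m') : Fil2 k U m ≤ Fil2 k U m' :=
  Submodule.span_mono (fun _ ⟨i, j, hij, u, hu, v, hv, he⟩ =>
    ⟨i, j, hij.trans h, u, hu, v, hv, he⟩)

lemma tmul_mem_Fil2 {i j m : ℕ} (hij : i + j ≤ m) {u v : A}
    (hu : u ∈ Fil k U i) (hv : v ∈ Fil k U j) : u ⊗ₜ[k] v ∈ Fil2 k U m :=
  Submodule.subset_span ⟨i, j, hij, u, hu, v, hv, rfl⟩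

lemma mul_prim_mem_Fil2 (x : N) {m : ℕ} {z : A ⊗[k] A} (hz : z ∈ Fil2 k U m) :
    ((ιA x) ⊗ₜ[k] 1 + 1 ⊗ₜ[k] (ιA x)) * z ∈ Fil2 k U (m + 1) := by
  induction hz using Submodule.span_induction with
  | mem z h =>
    obtain ⟨i, j, hij, u, hu, v, hv, rfl⟩ := h
    rw [add_mul, Algebra.TensorProduct.tmul_mul_tmul, Algebra.TensorProduct.tmul_mul_tmul]
    simp only [one_mul, mul_one]
    refine add_mem (tmul_mem_Fil2 (i := 1 + i) (j := j) (by omega) ?_ hv)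
      (tmul_mem_Fil2 (i := i) (j := 1 + j) (by omega) hu ?_)
    · exact mul_mem_Fil (ι_mem_Fil le_rfl x) hu
    · exact mul_mem_Fil (ι_mem_Fil le_rfl x) hv
  | zero => simp
  | add u v _ _ hu hv => rw [mul_add]; exact add_mem hu hv
  | smul c u _ hu => rw [mul_smul_comm]; exact Submodule.smul_mem _ _ hu

lemma one_mem_Fil2 : (1 : A ⊗[k] A) ∈ Fil2 k U 0 := by
  rw [Algebra.TensorProduct.one_def]
  exact tmul_mem_Fil2 (i := 0) (j := 0) (m := 0) le_rfl (one_mem_Fil 0) (one_mem_Fil 0)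

lemma comulA_monomial_mem (l : List N) :
    comulA k U (l.map fun z => ιA z).prod ∈ Fil2 k U l.length := by
  induction l with
  | nil =>
    rw [List.map_nil, List.prod_nil, map_one]
    exact one_mem_Fil2
  | cons x t ih =>
    rw [List.map_cons, List.prod_cons, map_mul, comulA_ι]
    exact mul_prim_mem_Fil2 x ih

lemma comulA_mem_Fil2 {m : ℕ} {a : A} (ha : a ∈ Fil k U m) :
    comulA k U a ∈ Fil2 k U m := by
  induction ha using Submodule.span_induction with
  | mem a h =>
    obtain ⟨l, hl, rfl⟩ := h
    exact Fil2_mono hl (comulA_monomial_mem l)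
  | zero => simp
  | add u v _ _ hu hv => rw [map_add]; exact add_mem hu hv
  | smul c u _ hu => rw [map_smul]; exact Submodule.smul_mem _ _ hu

variable (k U) in
/-- `z ↦ [ιx, -] * -` applied to tensors -/
noncomputable def Emap (x : N) : (A ⊗[k] A) →ₗ[k] A :=
  (LinearMap.mul' k (UniversalEnvelopingAlgebra k (primLie k U))).comp
    (LinearMap.rTensor _ (LinearMap.mulLeft k (ιA x) - LinearMap.mulRight k (ιA x)))

lemma Emap_tmul (x : N) (u v : A) :
    Emap k U x (u ⊗ₜ[k] v) = (ιA x * u - u * ιA x) * v := by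
  simp [Emap, LinearMap.mul'_apply, sub_mul]

lemma Emap_mem_Fil (x : N) {m : ℕ} {z : A ⊗[k] A} (hz : z ∈ Fil2 k U m) :
    Emap k U x z ∈ Fil k U m := by
  induction hz using Submodule.span_induction with
  | mem z h =>
    obtain ⟨i, j, hij, u, hu, v, hv, rfl⟩ := h
    rw [Emap_tmul]
    exact Fil_mono hij (mul_mem_Fil (comm_mem_Fil x hu) hv)
  | zero => simp
  | add u v _ _ hu hv => rw [map_add]; exact add_mem hu hv
  | smul c u _ hu => rw [map_smul]; exact Submodule.smul_mem _ _ hu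

variable (k U) in
/-- the Adams operation `mul ∘ comul` -/
noncomputable def psiMap : (UniversalEnvelopingAlgebra k (primLie k U)) →ₗ[k] (UniversalEnvelopingAlgebra k (primLie k U)) :=
  (LinearMap.mul' k _).comp (comulA k U).toLinearMap

lemma psiMap_apply (a : A) : psiMap k U a = LinearMap.mul' k _ (comulA k U a) := rfl

lemma psi_mul_prim (x : N) (z : A ⊗[k] A) :
    LinearMap.mul' k (UniversalEnvelopingAlgebra k (primLie k U))
        (((ιA x) ⊗ₜ[k] 1 + 1 ⊗ₜ[k] (ιA x)) * z)
      = (ιA x * LinearMap.mul' k _ z) + (ιA x * LinearMap.mul' k _ z) - Emap k U x z := by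
  induction z using TensorProduct.induction_on with
  | zero => simp
  | tmul u v =>
    rw [add_mul, Algebra.TensorProduct.tmul_mul_tmul, Algebra.TensorProduct.tmul_mul_tmul]
    simp only [one_mul, mul_one]
    rw [map_add, LinearMap.mul'_apply, LinearMap.mul'_apply, LinearMap.mul'_apply, Emap_tmul]
    noncomm_ring
  | add z w hz hw =>
    simp only [mul_add, map_add, hz, hw]
    abel

lemma psi_monomial (l : List N) :
    psiMap k U (l.map fun z => ιA z).prod
        - (2 : k) ^ l.length • (l.map fun z => ιA z).prod
      ∈ Fil k U (l.length - 1) := by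
  induction l with
  | nil => simp [psiMap_apply, Algebra.TensorProduct.one_def, LinearMap.mul'_apply]
  | cons x t ih =>
    rw [List.map_cons, List.prod_cons]
    set w := (t.map fun z => ιA z).prod with hw
    have h1 : psiMap k U (ιA x * w)
        = (ιA x * psiMap k U w) + (ιA x * psiMap k U w) - Emap k U x (comulA k U w) := by
      rw [psiMap_apply, map_mul, comulA_ι, psi_mul_prim, psiMap_apply]
    have e1 : ∀ c : k, ιA x * (psiMap k U w - c • w) = ιA x * psiMap k U w - c • (ιA x * w) := by
      intro c; rw [mul_sub, mul_smul_comm]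
    have e2 : (2 : k) ^ (t.length + 1) • (ιA x * w)
        = (2 : k) ^ t.length • (ιA x * w) + (2 : k) ^ t.length • (ιA x * w) := by
      rw [← add_smul]; congr 1; rw [pow_succ]; ring
    have hdecomp : psiMap k U (ιA x * w) - (2 : k) ^ (t.length + 1) • (ιA x * w)
        = (ιA x * (psiMap k U w - (2 : k) ^ t.length • w))
          + (ιA x * (psiMap k U w - (2 : k) ^ t.length • w))
          - Emap k U x (comulA k U w) := by
      rw [h1, e1, e2]; abel
    have hlen : ((x :: t) : List N).length = t.length + 1 := rfl
    rw [hlen, hdecomp]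
    have hE : Emap k U x (comulA k U w) ∈ Fil k U t.length :=
      Emap_mem_Fil x (comulA_mem_Fil2 (monomial_mem_Fil t le_rfl))
    have hterm : ιA x * (psiMap k U w - (2 : k) ^ t.length • w) ∈ Fil k U t.length := by
      rcases t with _ | ⟨y, t'⟩
      · simp only [List.map_nil, List.prod_nil, hw] at *
        have : psiMap k U (1 : A) - (2:(k)) ^ (0:ℕ) • (1 : A) = 0 := by
          simp [psiMap_apply, Algebra.TensorProduct.one_def, LinearMap.mul'_apply]
        rw [List.length_nil, pow_zero] at *
        rw [show psiMap k U (1:A) - (1:k) • 1 = 0 by simpa using this]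
        simp
      · have h2 := mul_mem_Fil (ι_mem_Fil le_rfl x) ih
        have : 1 + ((y :: t').length - 1) = (y :: t').length := by
          rw [List.length_cons]; omega
        rwa [this] at h2
    refine sub_mem (add_mem hterm hterm) ?_
    simpa using hE

lemma psi_mem_Fil {m : ℕ} {a : A} (ha : a ∈ Fil k U m) :
    psiMap k U a - (2 : k) ^ m • a ∈ Fil k U (m - 1) := by
  induction ha using Submodule.span_induction with
  | mem a h =>
    obtain ⟨l, hl, rfl⟩ := h
    have key : psiMap k U (l.map fun z => ιA z).prod
          - (2 : k) ^ m • (l.map fun z => ιA z).prod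
        = (psiMap k U (l.map fun z => ιA z).prod
            - (2 : k) ^ l.length • (l.map fun z => ιA z).prod)
          + ((2 : k) ^ l.length - (2 : k) ^ m) • (l.map fun z => ιA z).prod := by
      rw [sub_smul]; abel
    rw [key]
    refine add_mem (Fil_mono (by omega) (psi_monomial l)) ?_
    rcases eq_or_lt_of_le hl with rfl | hlt
    · simp
    · exact Submodule.smul_mem _ _ (Fil_mono (by omega) (monomial_mem_Fil l le_rfl))
  | zero => simp
  | add u v _ _ hu hv =>
    have : psiMap k U (u + v) - (2:k) ^ m • (u + v)
        = (psiMap k U u - (2:k) ^ m • u) + (psiMap k U v - (2:k) ^ m • v) := by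
      rw [map_add, smul_add]; abel
    rw [this]; exact add_mem hu hv
  | smul c u _ hu =>
    have : psiMap k U (c • u) - (2:k) ^ m • (c • u)
        = c • (psiMap k U u - (2:k) ^ m • u) := by
      rw [map_smul, smul_sub, smul_comm]
    rw [this]; exact Submodule.smul_mem _ _ hu

variable (k U) in
/-- reduced comultiplication -/
noncomputable def Dmap : (UniversalEnvelopingAlgebra k (primLie k U)) →ₗ[k]
    ((UniversalEnvelopingAlgebra k (primLie k U)) ⊗[k] (UniversalEnvelopingAlgebra k (primLie k U))) :=
  (comulA k U).toLinearMap - (TensorProduct.mk k _ _).flip 1 - TensorProduct.mk k _ _ 1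

lemma Dmap_apply (a : A) : Dmap k U a = comulA k U a - a ⊗ₜ[k] 1 - 1 ⊗ₜ[k] a := rfl

variable (k U) in
noncomputable def FilT (m : ℕ) : Submodule k
    ((UniversalEnvelopingAlgebra k (primLie k U)) ⊗[k] (UniversalEnvelopingAlgebra k (primLie k U))) :=
  LinearMap.range (TensorProduct.map (Fil k U m).subtype (Fil k U m).subtype)

lemma tmul_mem_FilT {m : ℕ} {u v : A} (hu : u ∈ Fil k U m) (hv : v ∈ Fil k U m) :
    u ⊗ₜ[k] v ∈ FilT k U m :=
  ⟨(⟨u, hu⟩ : Fil k U m) ⊗ₜ[k] (⟨v, hv⟩ : Fil k U m), by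
    rw [TensorProduct.map_tmul]; rfl⟩

lemma FilT_mono {m m' : ℕ} (h : m ≤ m') : FilT k U m ≤ FilT k U m' := by
  rintro z ⟨s, rfl⟩
  refine ⟨TensorProduct.map (Submodule.inclusion (Fil_mono h))
    (Submodule.inclusion (Fil_mono h)) s, ?_⟩
  rw [← LinearMap.comp_apply, ← TensorProduct.map_comp]
  congr 1

lemma mul_prim_mem_FilT (x : N) {m : ℕ} (hm : 1 ≤ m) {z : A ⊗[k] A}
    (hz : z ∈ FilT k U (m - 1)) :
    ((ιA x) ⊗ₜ[k] 1 + 1 ⊗ₜ[k] (ιA x)) * z ∈ FilT k U m := by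
  obtain ⟨s, rfl⟩ := hz
  induction s using TensorProduct.induction_on with
  | zero => simp
  | tmul u v =>
    rw [TensorProduct.map_tmul]
    rw [add_mul, Algebra.TensorProduct.tmul_mul_tmul, Algebra.TensorProduct.tmul_mul_tmul]
    simp only [one_mul, mul_one]
    refine add_mem (tmul_mem_FilT ?_ ?_) (tmul_mem_FilT ?_ ?_)
    · have h2 := mul_mem_Fil (ι_mem_Fil le_rfl x) u.2
      rwa [Nat.add_sub_cancel' hm] at h2
    · exact Fil_mono (by omega) v.2
    · exact Fil_mono (by omega) u.2
    · have h2 := mul_mem_Fil (ι_mem_Fil le_rfl x) v.2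
      rwa [Nat.add_sub_cancel' hm] at h2
  | add s t hs ht =>
    rw [map_add, mul_add]
    exact add_mem hs ht

lemma Dmap_monomial (l : List N) :
    Dmap k U (l.map fun z => ιA z).prod ∈ FilT k U (l.length - 1) := by
  induction l with
  | nil =>
    rw [List.map_nil, List.prod_nil]
    have h1 : Dmap k U (1 : A) = - ((1:A) ⊗ₜ[k] (1:A)) := by
      rw [Dmap_apply, map_one, Algebra.TensorProduct.one_def]
      abel
    rw [h1]
    exact neg_mem (tmul_mem_FilT (one_mem_Fil 0) (one_mem_Fil 0))
  | cons x t ih =>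
    rcases t with _ | ⟨y, t'⟩
    · rw [List.map_cons, List.map_nil, List.prod_cons, List.prod_nil, mul_one]
      have h1 : Dmap k U (ιA x) = 0 := by
        rw [Dmap_apply, comulA_ι]; abel
      rw [h1]; exact zero_mem _
    · rw [List.map_cons, List.prod_cons]
      set w := ((y :: t').map fun z => ιA z).prod with hw
      have hcw : comulA k U w = Dmap k U w + w ⊗ₜ[k] 1 + 1 ⊗ₜ[k] w := by
        rw [Dmap_apply]; abel
      have key : Dmap k U (ιA x * w)
          = (ιA x) ⊗ₜ[k] w + w ⊗ₜ[k] (ιA x)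
            + ((ιA x) ⊗ₜ[k] 1 + 1 ⊗ₜ[k] (ιA x)) * Dmap k U w := by
        rw [Dmap_apply, map_mul, comulA_ι, hcw]
        simp only [mul_add, add_mul, Algebra.TensorProduct.tmul_mul_tmul, one_mul, mul_one]
        abel
      rw [key]
      have hlen1 : 1 ≤ ((y :: t') : List N).length := by
        rw [List.length_cons]; omega
      have hgoal : ((x :: y :: t') : List N).length - 1 = ((y :: t') : List N).length := by
        simp
      rw [hgoal]
      refine add_mem (add_mem (tmul_mem_FilT ?_ ?_) (tmul_mem_FilT ?_ ?_)) ?_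
      · exact ι_mem_Fil hlen1 x
      · exact monomial_mem_Fil _ le_rfl
      · exact monomial_mem_Fil _ le_rfl
      · exact ι_mem_Fil hlen1 x
      · exact mul_prim_mem_FilT x hlen1 ih

lemma Dmap_mem_FilT {m : ℕ} {a : A} (ha : a ∈ Fil k U (m + 1)) :
    Dmap k U a ∈ FilT k U m := by
  induction ha using Submodule.span_induction with
  | mem a h =>
    obtain ⟨l, hl, rfl⟩ := h
    exact FilT_mono (by omega) (Dmap_monomial l)
  | zero => simp
  | add u v _ _ hu hv => rw [map_add]; exact add_mem hu hv
  | smul c u _ hu => rw [map_smul]; exact Submodule.smul_mem _ _ hu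

lemma exists_mem_Fil (a : A) : ∃ m, a ∈ Fil k U m := by
  have hsurj : Function.Surjective (UniversalEnvelopingAlgebra.mkAlgHom k (primLie k U)) :=
    RingCon.mkₐ_surjective _
  obtain ⟨t, rfl⟩ := hsurj a
  induction t using TensorAlgebra.induction with
  | algebraMap r =>
    refine ⟨0, ?_⟩
    rw [AlgHom.commutes, Algebra.algebraMap_eq_smul_one]
    exact Submodule.smul_mem _ _ (one_mem_Fil 0)
  | ι x =>
    refine ⟨1, ?_⟩
    rw [← UniversalEnvelopingAlgebra.ι_apply]
    exact ι_mem_Fil le_rfl x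
  | mul a b ha hb =>
    obtain ⟨i, hi⟩ := ha
    obtain ⟨j, hj⟩ := hb
    exact ⟨i + j, by rw [map_mul]; exact mul_mem_Fil hi hj⟩
  | add a b ha hb =>
    obtain ⟨i, hi⟩ := ha
    obtain ⟨j, hj⟩ := hb
    exact ⟨max i j, by
      rw [map_add]
      exact add_mem (Fil_mono (le_max_left i j) hi) (Fil_mono (le_max_right i j) hj)⟩

lemma phi_inj_Fil : ∀ m : ℕ, ∀ a ∈ Fil k U m, phi k U a = 0 → a = 0 := by
  intro m
  induction m with
  | zero =>
    intro a ha h0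
    have h1 : a ∈ Submodule.span k ({1} : Set A) := by
      refine Submodule.span_le.mpr ?_ ha
      rintro b ⟨l, hl, rfl⟩
      have hnil : l = [] := List.eq_nil_of_length_eq_zero (Nat.le_zero.mp hl)
      subst hnil
      rw [List.map_nil, List.prod_nil]
      exact Submodule.mem_span_singleton_self (1 : A)
    obtain ⟨c, hc⟩ := Submodule.mem_span_singleton.mp h1
    rw [← hc] at h0 ⊢
    rw [map_smul, map_one] at h0
    rcases smul_eq_zero.mp h0 with hc0 | h10
    · rw [hc0, zero_smul]
    · exact absurd h10 (one_ne_zero_U (@Bialgebra.counit_one k U _ _ _))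
  | succ m ih =>
    intro a ha h0
    rcases Nat.eq_zero_or_pos m with rfl | hm
    · -- a ∈ Fil 1, direct argument via the counit
      have h1 : a ∈ Submodule.span k ({1} : Set A)
          ⊔ LinearMap.range (ιA).toLinearMap := by
        refine Submodule.span_le.mpr ?_ ha
        rintro b ⟨l, hl, rfl⟩
        rcases l with _ | ⟨x, l'⟩
        · rw [List.map_nil, List.prod_nil]
          exact Submodule.mem_sup_left (Submodule.mem_span_singleton_self 1)
        · have hl' : l' = [] := by
            rw [List.length_cons] at hl
            exact List.eq_nil_of_length_eq_zero (by omega)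
          subst hl'
          rw [List.map_cons, List.map_nil, List.prod_cons, List.prod_nil, mul_one]
          exact Submodule.mem_sup_right ⟨x, rfl⟩
      obtain ⟨b, hb, c', hc', rfl⟩ := Submodule.mem_sup.mp h1
      obtain ⟨c, hc⟩ := Submodule.mem_span_singleton.mp hb
      obtain ⟨y, rfl⟩ := hc'
      rw [← hc] at h0 ⊢
      have hy : phi k U ((ιA).toLinearMap y) = (y : U) := phi_ι y
      rw [map_add, map_smul, map_one, hy] at h0
      have hcou := congrArg (Coalgebra.counit (R := k)) h0
      rw [map_zero, map_add, map_smul, Bialgebra.counit_one, counit_primLie y.2] at hcou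
      have hc0 : c = 0 := by simpa using hcou
      rw [hc0, zero_smul, zero_add] at h0 ⊢
      have hy0 : y = 0 := by
        ext
        simpa using h0
      rw [hy0, map_zero]
    · -- m ≥ 1 : minimal kernel elements are primitive, then use the Adams operation
      obtain ⟨s, hs⟩ := Dmap_mem_FilT (m := m) ha
      have hD : TensorProduct.map (phi k U).toLinearMap (phi k U).toLinearMap (Dmap k U a)
          = 0 := by
        rw [Dmap_apply, map_sub, map_sub, comul_phi, h0, map_zero,
          TensorProduct.map_tmul, TensorProduct.map_tmul]
        have h0' : (phi k U).toLinearMap a = 0 := h0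
        rw [h0']
        simp
      set f := (phi k U).toLinearMap ∘ₗ (Fil k U m).subtype with hf
      have hfinj : Function.Injective f := by
        rw [← LinearMap.ker_eq_bot]
        refine (Submodule.eq_bot_iff _).mpr ?_
        rintro u hu
        have hphi : phi k U (u : A) = 0 := hu
        have hz : (u : A) = 0 := ih (u : A) u.2 hphi
        ext
        simpa using hz
      have hmapinj : Function.Injective (TensorProduct.map f f) := by
        rw [← LinearMap.lTensor_comp_rTensor, LinearMap.coe_comp]
        exact (Module.Flat.lTensor_preserves_injective_linearMap f hfinj).comp
          (Module.Flat.rTensor_preserves_injective_linearMap f hfinj)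
      have hmapff : TensorProduct.map f f s = 0 := by
        have hcomp : TensorProduct.map f f
            = TensorProduct.map (phi k U).toLinearMap (phi k U).toLinearMap
              ∘ₗ TensorProduct.map (Fil k U m).subtype (Fil k U m).subtype := by
          rw [← TensorProduct.map_comp]
        rw [hcomp, LinearMap.comp_apply, hs, hD]
      have hs0 : s = 0 := hmapinj (by rw [hmapff, map_zero])
      have hDa : Dmap k U a = 0 := by rw [← hs, hs0, map_zero]
      rw [Dmap_apply, sub_sub, sub_eq_zero] at hDa
      have hpsi : psiMap k U a = a + a := by
        rw [psiMap_apply, hDa, map_add, LinearMap.mul'_apply, LinearMap.mul'_apply,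
          mul_one, one_mul]
      have h2 := psi_mem_Fil ha
      rw [Nat.add_sub_cancel, hpsi] at h2
      have key : ((2:k) - 2 ^ (m + 1)) • a ∈ Fil k U m := by
        have e : ((2:k) - 2 ^ (m + 1)) • a = (a + a) - (2:k) ^ (m + 1) • a := by
          rw [sub_smul, two_smul]
        rw [e]; exact h2
      have hc0 : ((2:k) - 2 ^ (m + 1)) ≠ 0 := by
        intro h
        rw [sub_eq_zero] at h
        have h' : ((2:ℕ) : k) = ((2 ^ (m + 1) : ℕ) : k) := by push_cast; exact h
        have h'' := Nat.cast_injective h'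
        have h4 : (2:ℕ) ^ 2 ≤ 2 ^ (m + 1) := Nat.pow_le_pow_right (by norm_num) (by omega)
        norm_num at h4
        omega
      have ha' : a ∈ Fil k U m := by
        have hsm := Submodule.smul_mem (Fil k U m) ((2:k) - 2 ^ (m + 1))⁻¹ key
        rwa [inv_smul_smul₀ hc0] at hsm
      exact ih a ha' h0

lemma phi_injective : Function.Injective (phi k U) := by
  have h0 : ∀ a : A, phi k U a = 0 → a = 0 := by
    intro a h
    obtain ⟨m, hm⟩ := exists_mem_Fil a
    exact phi_inj_Fil m a hm h
  intro a b hab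
  have h1 := h0 (a - b) (by rw [map_sub, hab, sub_self])
  exact sub_eq_zero.mp h1

end UEA
end MMproof

/-- Milnor–Moore/Cartier–Kostant: a cocommutative Hopf algebra over a field of
characteristic zero generated as an algebra by finitely many primitive elements is
isomorphic to the universal enveloping algebra of its Lie algebra of primitives. -/
theorem hopf_iso_enveloping_of_primitively_generated {k U : Type*} [Field k] [CharZero k]
    [Ring U] [HopfAlgebra k U]
    (hcocomm : ∀ u : U, (TensorProduct.comm k U U) (Coalgebra.comul (R := k) u) =
      Coalgebra.comul (R := k) u)
    (S : Finset U)
    (hSprim : ∀ x ∈ S, Coalgebra.comul (R := k) x = x ⊗ₜ[k] 1 + 1 ⊗ₜ[k] x)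
    (hgen : Algebra.adjoin k (S : Set U) = ⊤) :
    ∃ n : LieSubalgebra k U,
      (n : Set U) = {x : U | Coalgebra.comul (R := k) x = x ⊗ₜ[k] 1 + 1 ⊗ₜ[k] x} ∧
      ∃ φ : UniversalEnvelopingAlgebra k n ≃ₐ[k] U,
        ∀ x : n, φ (UniversalEnvelopingAlgebra.ι k x) = (x : U) := by
  refine ⟨MMproof.primLie k U, rfl, ?_⟩
  have hsurj : Function.Surjective (MMproof.phi k U) := by
    have hle : Algebra.adjoin k (S : Set U) ≤ (MMproof.phi k U).range := by
      refine Algebra.adjoin_le ?_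
      intro s hs
      exact ⟨UniversalEnvelopingAlgebra.ι k
        (⟨s, (MMproof.mem_primLie).mpr (hSprim s hs)⟩ : MMproof.primLie k U),
        MMproof.phi_ι _⟩
    intro u
    have hu : u ∈ Algebra.adjoin k (S : Set U) := by rw [hgen]; exact Algebra.mem_top
    exact hle hu
  refine ⟨AlgEquiv.ofBijective (MMproof.phi k U) ⟨MMproof.phi_injective, hsurj⟩, ?_⟩
  intro x
  exact MMproof.phi_ι x
end
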